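/- Let F be a right-continuous distribution function with F(0−) = 0 such that the limit lim_{h→0+} (F(h) − F(0))/h exists in [0, ∞], and suppose F is not concentrated at 0 (i.e., F does not assign probability 1 to the point 0). Write F̄(x) = 1 − F(x). Then F̄(2x) = F̄(x)² for all x ≥ 0 if and only if there exists λ > 0 such that F(x) = 1 − e^{−λx} for all x ≥ 0. -/

import Mathlib

open Filter Topology

private lemma ag_slope_log : Tendsto (fun t : ℝ => -Real.log (1 - t) / t)
    (𝓝[≠] (0 : ℝ)) (𝓝 1) := by
  have h1 : HasDerivAt (fun t : ℝ => 1 - t) (-1) 0 := (hasDerivAt_id (0:ℝ)).const_sub 1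
  have h2 : HasDerivAt Real.log 1 ((fun t : ℝ => 1 - t) 0) := by
    simpa using Real.hasDerivAt_log (by norm_num : (1:ℝ) - 0 ≠ 0)
  have h3 : HasDerivAt (fun t : ℝ => -Real.log (1 - t)) 1 0 := by
    have := (h2.comp 0 h1).neg
    exact this.congr_deriv (by norm_num)
  have h4 := hasDerivAt_iff_tendsto_slope.mp h3
  refine h4.congr (fun t => ?_)
  simp [slope_def_field]

/-- **Arnold–Gupta characterization** (used by Angus). Let `F` be a right-continuous
distribution function with `F(0-) = 0`, such that the limit of `(F h - F 0)/h` as `h → 0+`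
exists in `[0, ∞]`, and which is not concentrated at `0`. Then `1 - F (2x) = (1 - F x)^2`
for all `x ≥ 0` iff `F` is an exponential distribution function. -/
theorem arnold_gupta_characterization_exponential
    (F : ℝ → ℝ) (hmono : Monotone F)
    (hrc : ∀ x : ℝ, ContinuousWithinAt F (Set.Ici x) x)
    (htop : Tendsto F atTop (𝓝 1)) (hbot : Tendsto F atBot (𝓝 0))
    (hzero_minus : Tendsto F (𝓝[<] (0 : ℝ)) (𝓝 0))
    (hlim : ∃ l : ENNReal,
      Tendsto (fun h : ℝ => ENNReal.ofReal ((F h - F 0) / h)) (𝓝[>] (0 : ℝ)) (𝓝 l))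
    (hnotconc : F 0 ≠ 1) :
    (∀ x : ℝ, 0 ≤ x → 1 - F (2 * x) = (1 - F x) ^ 2) ↔
      ∃ l : ℝ, 0 < l ∧ ∀ x : ℝ, 0 ≤ x → F x = 1 - Real.exp (-l * x) := by
  constructor
  · intro heq
    -- F 0 = 0
    have hF0 : F 0 = 0 := by
      have h : 1 - F 0 = (1 - F 0) ^ 2 := by simpa using heq 0 le_rfl
      have h2 : (1 - F 0) * (F 0) = 0 := by nlinarith [h]
      rcases mul_eq_zero.mp h2 with h3 | h3
      · exact absurd (by linarith) hnotconc
      · exact h3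
    -- F x ≤ 1
    have hle1 : ∀ x : ℝ, F x ≤ 1 := fun x =>
      ge_of_tendsto htop (eventually_atTop.mpr ⟨x, fun y hy => hmono hy⟩)
    -- F h > 0 for h > 0
    have hFpos : ∀ h : ℝ, 0 < h → 0 < F h := by
      intro h hh
      by_contra hc
      push_neg at hc
      have hFh : F h = 0 := le_antisymm hc (hF0 ▸ hmono hh.le)
      have hzero : ∀ n : ℕ, F (2 ^ n * h) = 0 := by
        intro n
        induction n with
        | zero => simpa using hFh
        | succ n ih =>
          have h1 := heq (2 ^ n * h) (by positivity)
          rw [ih] at h1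
          have h2 : F (2 * (2 ^ n * h)) = 0 := by nlinarith [h1]
          have h3 : (2:ℝ) ^ (n + 1) * h = 2 * (2 ^ n * h) := by ring
          rw [h3, h2]
      have htt : Tendsto (fun n : ℕ => (2:ℝ) ^ n * h) atTop atTop :=
        (tendsto_pow_atTop_atTop_of_one_lt (by norm_num : (1:ℝ) < 2)).atTop_mul_const hh
      have h1 : Tendsto (fun n : ℕ => F ((2:ℝ) ^ n * h)) atTop (𝓝 1) := htop.comp htt
      have h0 : Tendsto (fun n : ℕ => F ((2:ℝ) ^ n * h)) atTop (𝓝 0) := by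
        simp only [hzero]; exact tendsto_const_nhds
      exact one_ne_zero (tendsto_nhds_unique h1 h0)
    -- key doubling identity
    have key : ∀ x : ℝ, 0 ≤ x → ∀ n : ℕ, 1 - F x = (1 - F (x / 2 ^ n)) ^ (2 ^ n) := by
      intro x hx n
      induction n with
      | zero => simp
      | succ n ih =>
        have h1 := heq (x / 2 ^ (n + 1)) (div_nonneg hx (by positivity))
        have h2 : 2 * (x / 2 ^ (n + 1)) = x / 2 ^ n := by ring
        rw [h2] at h1
        rw [ih, h1, ← pow_mul]
        congr 1
        rw [pow_succ]
        ring
    -- F at 0+ : tendsto 0 within Ioi 0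
    have hF0plus : Tendsto F (𝓝[>] (0:ℝ)) (𝓝 0) := by
      have := (hrc 0).tendsto
      rw [hF0] at this
      exact this.mono_left (nhdsWithin_mono 0 Set.Ioi_subset_Ici_self)
    have hseq : ∀ x : ℝ, 0 < x → Tendsto (fun n : ℕ => x / 2 ^ n) atTop (𝓝[>] (0:ℝ)) := by
      intro x hx
      rw [tendsto_nhdsWithin_iff]
      constructor
      · have : Tendsto (fun n : ℕ => x * (1/2:ℝ) ^ n) atTop (𝓝 (x * 0)) :=
          (tendsto_pow_atTop_nhds_zero_of_lt_one (by norm_num) (by norm_num)).const_mul x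
        simpa [div_eq_mul_inv, ← inv_pow] using this
      · exact Eventually.of_forall fun n => div_pos hx (by positivity)
    -- F x < 1 on [0, ∞)
    have hlt1 : ∀ x : ℝ, 0 ≤ x → F x < 1 := by
      intro x hx
      rcases eq_or_lt_of_le (hle1 x) with h | h
      · exfalso
        rcases eq_or_lt_of_le hx with rfl | hx'
        · exact hnotconc h
        · have hone : ∀ n : ℕ, F (x / 2 ^ n) = 1 := by
            intro n
            have hk := key x hx n
            rw [h] at hk
            have h2 : (1 - F (x / 2 ^ n)) ^ (2 ^ n) = 0 := by linarith
            have h3 : 1 - F (x / 2 ^ n) = 0 :=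
              pow_eq_zero_iff (by positivity : 2 ^ n ≠ 0) |>.mp h2
            linarith
          have h1 : Tendsto (fun n : ℕ => F (x / 2 ^ n)) atTop (𝓝 0) :=
            hF0plus.comp (hseq x hx')
          have h0 : Tendsto (fun n : ℕ => F (x / 2 ^ n)) atTop (𝓝 1) := by
            simp only [hone]; exact tendsto_const_nhds
          exact one_ne_zero (tendsto_nhds_unique h0 h1)
      · exact h
    -- phi
    set φ : ℝ → ℝ := fun x => -Real.log (1 - F x) with hφdef
    have hφkey : ∀ x : ℝ, 0 < x → ∀ n : ℕ, φ (x / 2 ^ n) / (x / 2 ^ n) = φ x / x := by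
      intro x hx n
      have hk := key x hx.le n
      have hx2 : φ x = 2 ^ n * φ (x / 2 ^ n) := by
        simp only [hφdef]
        rw [hk, Real.log_pow]
        push_cast
        ring
      rw [hx2]
      have h2 : ((2:ℝ) ^ n) ≠ 0 := by positivity
      field_simp
    -- φ h ≥ F h for h ≥ 0
    have hφge : ∀ h : ℝ, 0 ≤ h → F h ≤ φ h := by
      intro h hh
      have h1 : (0:ℝ) < 1 - F h := by linarith [hlt1 h hh]
      have := Real.log_le_sub_one_of_pos h1
      simp only [hφdef]
      linarith
    obtain ⟨l, hl⟩ := hlim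
    simp only [hF0, sub_zero] at hl
    -- l ≠ ⊤
    have hlne : l ≠ ⊤ := by
      intro hltop
      rw [hltop] at hl
      have hFtop : Tendsto (fun h : ℝ => F h / h) (𝓝[>] (0:ℝ)) atTop := by
        rw [tendsto_atTop]
        intro b
        have hb := (ENNReal.tendsto_nhds_top_iff_nat.mp hl) (Nat.ceil (max b 0))
        filter_upwards [hb, self_mem_nhdsWithin] with h hh hh0
        rw [ENNReal.lt_ofReal_iff_toReal_lt (by simp)] at hh
        push_cast at hh
        calc b ≤ max b 0 := le_max_left _ _
          _ ≤ (Nat.ceil (max b 0) : ℝ) := Nat.le_ceil _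
          _ ≤ F h / h := le_of_lt hh
      have hcomp : Tendsto (fun n : ℕ => F (1 / 2 ^ n) / (1 / 2 ^ n)) atTop atTop :=
        hFtop.comp (hseq 1 one_pos)
      have hbd : ∀ n : ℕ, F (1 / 2 ^ n) / ((1:ℝ) / 2 ^ n) ≤ φ 1 / 1 := by
        intro n
        rw [← hφkey 1 one_pos n]
        have hpos : (0:ℝ) < 1 / 2 ^ n := by positivity
        gcongr
        exact hφge _ hpos.le
      obtain ⟨n, hn⟩ := ((tendsto_atTop.mp hcomp) (φ 1 / 1 + 1)).exists
      linarith [hbd n]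
    -- real limit
    have hreal : Tendsto (fun h : ℝ => F h / h) (𝓝[>] (0:ℝ)) (𝓝 l.toReal) := by
      have h1 := (ENNReal.tendsto_toReal hlne).comp hl
      refine h1.congr' ?_
      filter_upwards [self_mem_nhdsWithin] with h hh
      simp only [Function.comp_apply]
      rw [ENNReal.toReal_ofReal (div_nonneg (hFpos h hh).le hh.le)]
    have hFto : Tendsto F (𝓝[>] (0:ℝ)) (𝓝[≠] (0:ℝ)) := by
      rw [tendsto_nhdsWithin_iff]
      refine ⟨hF0plus, ?_⟩
      filter_upwards [self_mem_nhdsWithin] with h hh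
      exact (hFpos h hh).ne'
    have hratio : Tendsto (fun h : ℝ => φ h / F h) (𝓝[>] (0:ℝ)) (𝓝 1) :=
      ag_slope_log.comp hFto
    have hφlim : Tendsto (fun h : ℝ => φ h / h) (𝓝[>] (0:ℝ)) (𝓝 l.toReal) := by
      have h1 := hratio.mul hreal
      rw [one_mul] at h1
      refine h1.congr' ?_
      filter_upwards [self_mem_nhdsWithin] with h hh
      have hne : F h ≠ 0 := (hFpos h hh).ne'
      field_simp
    -- φ x = l.toReal * x
    have hφeq : ∀ x : ℝ, 0 < x → φ x = l.toReal * x := by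
      intro x hx
      have h1 : Tendsto (fun n : ℕ => φ (x / 2 ^ n) / (x / 2 ^ n)) atTop (𝓝 l.toReal) :=
        hφlim.comp (hseq x hx)
      have h1' : Tendsto (fun n : ℕ => φ x / x) atTop (𝓝 l.toReal) :=
        h1.congr fun n => hφkey x hx n
      have h2 : φ x / x = l.toReal :=
        tendsto_nhds_unique tendsto_const_nhds h1'
      field_simp at h2
      linarith [h2]
    -- l.toReal > 0
    have hltr : 0 < l.toReal := by
      rcases lt_or_eq_of_le (ENNReal.toReal_nonneg (a := l)) with h | h
      · exact h
      · exfalso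
        have hFzero : ∀ x : ℝ, 0 < x → F x = 0 := by
          intro x hx
          have he := hφeq x hx
          rw [← h, zero_mul] at he
          have hpos : (0:ℝ) < 1 - F x := by linarith [hlt1 x hx.le]
          have hlog : Real.log (1 - F x) = 0 := by
            simp only [hφdef] at he; linarith
          have := Real.exp_log hpos
          rw [hlog, Real.exp_zero] at this
          linarith
        have h0' : Tendsto F atTop (𝓝 0) := by
          refine Tendsto.congr' ?_ (tendsto_const_nhds : Tendsto (fun _ : ℝ => (0:ℝ)) atTop (𝓝 0))
          filter_upwards [eventually_gt_atTop 0] with x hx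
          exact (hFzero x hx).symm
        exact one_ne_zero (tendsto_nhds_unique htop h0')
    refine ⟨l.toReal, hltr, fun x hx => ?_⟩
    rcases eq_or_lt_of_le hx with rfl | hx'
    · simp [hF0]
    · have he := hφeq x hx'
      have hpos : (0:ℝ) < 1 - F x := by linarith [hlt1 x hx]
      have hlog : Real.log (1 - F x) = -(l.toReal * x) := by
        simp only [hφdef] at he; linarith
      have hexp := Real.exp_log hpos
      rw [hlog] at hexp
      rw [show -l.toReal * x = -(l.toReal * x) by ring]
      linarith
  · rintro ⟨l, hlpos, hF⟩ x hx
    rw [hF (2 * x) (by linarith), hF x hx]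
    have h : -l * (2 * x) = -l * x + -l * x := by ring
    rw [h, Real.exp_add]
    ring
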